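/- Let R, C, μ > 0, let n ≥ 1 be an integer with Rμ ≥ Cn, let 0 ≤ a < m < b, and let 0 < d < 2(m−a)(b−m)/(b−a). Then inf_{P ∈ 𝒫(a,b,m,d)} ∫ r_n(ρ) dP(ρ) = (d/(2(m−a)))·r_n(a) + (1 − d/(2(m−a)) − d/(2(b−m)))·r_n(m) + (d/(2(b−m)))·r_n(b). -/

import Mathlib

open MeasureTheory

/-- The revenue rate function `r_n` of Naor's observable M/M/1 queue. -/
noncomputable def revenueRate (R C μ : ℝ) (n : ℕ) (ρ : ℝ) : ℝ :=
  if ρ = 1 then (R * μ - C * (n : ℝ)) * ((n : ℝ) / ((n : ℝ) + 1))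
  else (R * μ - C * (n : ℝ)) * (ρ * (1 - ρ ^ n) / (1 - ρ ^ (n + 1)))

/-- The MAD ambiguity set: Borel probability measures supported on `[a,b]`
with mean `m` and mean-absolute deviation `d`. -/
def MADSet (a b m d : ℝ) : Set (Measure ℝ) :=
  {P | IsProbabilityMeasure P ∧ P (Set.Icc a b)ᶜ = 0 ∧
    (∫ ρ, ρ ∂P) = m ∧ (∫ ρ, |ρ - m| ∂P) = d}

/-- geometric sum `∑_{k=0}^n x^k` -/
noncomputable def gs (n : ℕ) (x : ℝ) : ℝ := ∑ k ∈ Finset.range (n+1), x^k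
noncomputable def dgs (n : ℕ) (x : ℝ) : ℝ := ∑ k ∈ Finset.range (n+1), (k:ℝ)*x^(k-1)
noncomputable def ddgs (n : ℕ) (x : ℝ) : ℝ :=
  ∑ k ∈ Finset.range (n+1), (k:ℝ)*(((k-1:ℕ)):ℝ)*x^(k-1-1)

lemma hasDerivAt_gs (n : ℕ) (x : ℝ) : HasDerivAt (gs n) (dgs n x) x :=
  HasDerivAt.fun_sum fun k _ => hasDerivAt_pow k x

lemma hasDerivAt_dgs (n : ℕ) (x : ℝ) : HasDerivAt (dgs n) (ddgs n x) x := by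
  refine HasDerivAt.fun_sum fun k _ => ?_
  simpa [mul_assoc] using (hasDerivAt_pow (k-1) x).const_mul (k:ℝ)

lemma one_le_gs (n : ℕ) {x : ℝ} (hx : 0 ≤ x) : 1 ≤ gs n x := by
  have h0 : (0:ℕ) ∈ Finset.range (n+1) := by simp
  calc (1:ℝ) = x ^ 0 := by simp
  _ ≤ gs n x := Finset.single_le_sum (f := fun k => x ^ k)
      (fun k _ => pow_nonneg hx k) h0

lemma gs_pos (n : ℕ) {x : ℝ} (hx : 0 ≤ x) : 0 < gs n x :=
  lt_of_lt_of_le one_pos (one_le_gs n hx)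

lemma continuous_gs (n : ℕ) : Continuous (gs n) :=
  continuous_finset_sum _ fun k _ => continuous_pow k

lemma continuous_dgs (n : ℕ) : Continuous (dgs n) :=
  continuous_finset_sum _ fun k _ => continuous_const.mul (continuous_pow (k-1))

lemma continuous_ddgs (n : ℕ) : Continuous (ddgs n) :=
  continuous_finset_sum _ fun k _ => continuous_const.mul (continuous_pow (k-1-1))

lemma gs_id (n : ℕ) (x : ℝ) : (x - 1) * gs n x = x^(n+1) - 1 := by
  rw [mul_comm]; exact geom_sum_mul x (n+1)

lemma gs_id1 (n : ℕ) (x : ℝ) : (x - 1) * dgs n x + gs n x = ((n:ℝ)+1) * x^n := by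
  have h1 : HasDerivAt (fun x => (x - 1) * gs n x) ((x-1) * dgs n x + gs n x) x := by
    simpa [add_comm, one_mul] using ((hasDerivAt_id x).sub_const 1).fun_mul (hasDerivAt_gs n x)
  have h2 : HasDerivAt (fun x : ℝ => (x - 1) * gs n x) (((n:ℝ)+1) * x^n) x := by
    have : HasDerivAt (fun x : ℝ => x^(n+1) - 1) (((n:ℝ)+1) * x^n) x := by
      simpa using (hasDerivAt_pow (n+1) x).sub_const 1
    refine this.congr_of_eventuallyEq (Filter.Eventually.of_forall fun y => ?_)
    show (y - 1) * gs n y = y ^ (n+1) - 1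
    rw [gs_id]
  exact h1.unique h2

lemma gs_id2 (n : ℕ) (x : ℝ) :
    (x - 1) * ddgs n x + 2 * dgs n x = ((n:ℝ)+1) * (n:ℝ) * x^(n-1) := by
  have h1 : HasDerivAt (fun x => (x - 1) * dgs n x + gs n x)
      (((x-1) * ddgs n x + dgs n x) + dgs n x) x := by
    have ha : HasDerivAt (fun x => (x - 1) * dgs n x) ((x-1) * ddgs n x + dgs n x) x := by
      simpa [add_comm, one_mul] using ((hasDerivAt_id x).sub_const 1).fun_mul (hasDerivAt_dgs n x)
    exact ha.add (hasDerivAt_gs n x)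
  have h2 : HasDerivAt (fun x => (x - 1) * dgs n x + gs n x)
      (((n:ℝ)+1) * ((n:ℝ) * x^(n-1))) x := by
    have : HasDerivAt (fun x : ℝ => ((n:ℝ)+1) * x^n) (((n:ℝ)+1) * ((n:ℝ) * x^(n-1))) x :=
      (hasDerivAt_pow n x).const_mul _
    refine this.congr_of_eventuallyEq (Filter.Eventually.of_forall fun y => ?_)
    show (y - 1) * dgs n y + gs n y = ((n:ℝ)+1) * y ^ n
    rw [gs_id1]
  have := h1.unique h2
  linarith [this]

lemma key_ineq_aux (n : ℕ) (hn : 1 ≤ n) {x : ℝ} (hx : 0 < x) (hx1 : x ≠ 1) :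
    0 ≤ 2 * dgs n x ^ 2 - gs n x * ddgs n x := by
  set S := gs n x with hS
  set D := dgs n x with hD
  set E := ddgs n x with hE
  set y := x ^ n with hy
  have h0 : (x - 1) * S = x * y - 1 := by
    rw [hS, gs_id, hy, pow_succ, mul_comm (x^n) x]
  have h1 : (x - 1) * D + S = ((n:ℝ)+1) * y := gs_id1 n x
  have h2 : x * (x-1) * E + 2 * x * D = ((n:ℝ)+1) * (n:ℝ) * y := by
    have := gs_id2 n x
    have hxy : x * x^(n-1) = y := by
      rw [hy, ← pow_succ', Nat.sub_add_cancel hn]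
    calc x * (x-1) * E + 2 * x * D = x * ((x - 1) * E + 2 * D) := by ring
    _ = x * (((n:ℝ)+1) * (n:ℝ) * x^(n-1)) := by rw [this]
    _ = ((n:ℝ)+1) * (n:ℝ) * y := by rw [← hxy]; ring
  -- ψ and its nonnegativity
  set ψ := ∑ k ∈ Finset.range n, (x^(k+1) - 1) * (x^(n-k) - 1) with hψdef
  have hψ : 0 ≤ ψ := by
    refine Finset.sum_nonneg fun k _ => ?_
    rcases le_total x 1 with h | h
    · have h1 := pow_le_one₀ hx.le h (n := k+1)
      have h2 := pow_le_one₀ hx.le h (n := n-k)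
      nlinarith
    · have h1 := one_le_pow₀ h (n := k+1)
      have h2 := one_le_pow₀ h (n := n-k)
      nlinarith
  -- φ = (x-1) ψ
  have hφ : (n:ℝ) * x^2 * y - ((n:ℝ)+2) * x * y + ((n:ℝ)+2) * x - n = (x - 1) * ψ := by
    have hsplit : ψ = (n:ℝ) * (x * y) + (n:ℝ)
        - (∑ k ∈ Finset.range n, x^(k+1)) - (∑ k ∈ Finset.range n, x^(k+1)) := by
      have hrefl : (∑ k ∈ Finset.range n, x^(n-k)) = ∑ k ∈ Finset.range n, x^(k+1) := by
        rw [← Finset.sum_range_reflect (fun j => x^(j+1)) n]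
        refine Finset.sum_congr rfl fun k hk => ?_
        congr 1
        have := Finset.mem_range.mp hk
        omega
      have : ψ = ∑ k ∈ Finset.range n, (x^(n+1) - x^(k+1) - x^(n-k) + 1) := by
        refine Finset.sum_congr rfl fun k hk => ?_
        have hkn := Finset.mem_range.mp hk
        have : x^(k+1) * x^(n-k) = x^(n+1) := by
          rw [← pow_add]; congr 1; omega
        nlinarith [this]
      rw [this]
      simp only [Finset.sum_add_distrib, Finset.sum_sub_distrib, hrefl,
        Finset.sum_const, Finset.card_range, nsmul_eq_mul]
      rw [hy, ← pow_succ']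
      ring
    have hgeo : (x - 1) * (∑ k ∈ Finset.range n, x^(k+1)) = x * y - x := by
      have : (∑ k ∈ Finset.range n, x^(k+1)) = x * ∑ k ∈ Finset.range n, x^k := by
        rw [Finset.mul_sum]
        exact Finset.sum_congr rfl fun k _ => by rw [pow_succ']
      rw [this, hy]
      linear_combination x * geom_sum_mul x n
    rw [hsplit]
    linear_combination 2 * hgeo
  -- main identity
  have hmain : x * (x-1)^3 * (2*D^2 - S*E)
      = ((n:ℝ)+1) * y * ((n:ℝ) * x^2 * y - ((n:ℝ)+2) * x * y + ((n:ℝ)+2) * x - n) := by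
    linear_combination (-(2*((n:ℝ)+1)*x*y) - (n:ℝ)*((n:ℝ)+1)*(x-1)*y) * h0
      + (2*x*(x-1)*((x-1)*D + ((n:ℝ)+1)*y)) * h1 + (-((x-1)^2*S)) * h2
  rw [hφ] at hmain
  have hcancel : (x * (x-1)^2) * (2*D^2 - S*E) = ((n:ℝ)+1) * y * ψ := by
    have hne : x - 1 ≠ 0 := sub_ne_zero.mpr hx1
    apply mul_left_cancel₀ hne
    linear_combination hmain
  have hpos : 0 < x * (x-1)^2 := by
    have hne : x - 1 ≠ 0 := sub_ne_zero.mpr hx1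
    have h2 : 0 < (x-1)^2 := by
      rcases hne.lt_or_gt with h | h <;> nlinarith
    exact mul_pos hx h2
  have hrhs : 0 ≤ ((n:ℝ)+1) * y * ψ := by
    have h0y : (0:ℝ) ≤ y := by rw [hy]; positivity
    exact mul_nonneg (mul_nonneg (by positivity) h0y) hψ
  rw [← hcancel] at hrhs
  exact le_of_mul_le_mul_left (by simpa using hrhs) hpos

lemma key_ineq (n : ℕ) (hn : 1 ≤ n) {x : ℝ} (hx : 0 ≤ x) :
    0 ≤ 2 * dgs n x ^ 2 - gs n x * ddgs n x := by
  set A : ℝ → ℝ := fun x => 2 * dgs n x ^ 2 - gs n x * ddgs n x with hA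
  show 0 ≤ A x
  have hcont : Continuous A :=
    (continuous_const.mul ((continuous_dgs n).pow 2)).sub
      ((continuous_gs n).mul (continuous_ddgs n))
  have hlim : ∀ c : ℝ, (∀ᶠ y in nhdsWithin c (Set.Ioi c), 0 ≤ A y) → 0 ≤ A c := fun c hev =>
    ge_of_tendsto ((hcont.tendsto c).mono_left nhdsWithin_le_nhds) hev
  rcases eq_or_lt_of_le hx with h0 | h0
  · rw [← h0]
    refine hlim 0 ?_
    have hmem : Set.Ioo (0:ℝ) 1 ∈ nhdsWithin (0:ℝ) (Set.Ioi 0) :=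
      Ioo_mem_nhdsGT_of_mem ⟨le_refl 0, zero_lt_one⟩
    filter_upwards [hmem] with y hy
    exact key_ineq_aux n hn hy.1 (ne_of_lt hy.2)
  · by_cases hx1 : x = 1
    · rw [hx1]
      refine hlim 1 ?_
      filter_upwards [self_mem_nhdsWithin] with y hy
      exact key_ineq_aux n hn (lt_trans zero_lt_one hy) (ne_of_gt hy)
    · exact key_ineq_aux n hn h0 hx1

lemma convexOn_inv_gs (n : ℕ) (hn : 1 ≤ n) :
    ConvexOn ℝ (Set.Ici (0:ℝ)) (fun x => (gs n x)⁻¹) := by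
  refine convexOn_of_hasDerivWithinAt2_nonneg (convex_Ici 0)
    (f' := fun x => -dgs n x / gs n x ^ 2)
    (f'' := fun x => (-ddgs n x * gs n x ^ 2 - (-dgs n x) * ((2:ℕ) * gs n x ^ 1 * dgs n x))
        / (gs n x ^ 2) ^ 2) ?_ ?_ ?_ ?_
  · exact (continuous_gs n).continuousOn.inv₀ fun x hx => (gs_pos n hx).ne'
  · intro x hx
    rw [interior_Ici] at hx
    exact (((hasDerivAt_gs n x).inv (gs_pos n (le_of_lt hx)).ne')).hasDerivWithinAt
  · intro x hx
    rw [interior_Ici] at hx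
    have hne : gs n x ^ 2 ≠ 0 := pow_ne_zero _ (gs_pos n hx.le).ne'
    exact (((hasDerivAt_dgs n x).neg).div
      ((hasDerivAt_gs n x).pow 2) hne).hasDerivWithinAt
  · intro x hx
    rw [interior_Ici] at hx
    have hg := gs_pos n hx.le
    have hnum : 0 ≤ -ddgs n x * gs n x ^ 2 - (-dgs n x) * ((2:ℕ) * gs n x ^ 1 * dgs n x) := by
      have h1 := key_ineq n hn hx.le
      have hprod := mul_nonneg hg.le h1
      push_cast
      nlinarith [hprod]
    positivity

lemma gs_one (n : ℕ) : gs n 1 = (n:ℝ) + 1 := by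
  simp [gs]

lemma revenueRate_eq (R C μ : ℝ) (n : ℕ) {x : ℝ} (hx : 0 ≤ x) :
    revenueRate R C μ n x = (R * μ - C * (n:ℝ)) * (1 - (gs n x)⁻¹) := by
  unfold revenueRate
  by_cases h1 : x = 1
  · rw [if_pos h1, h1, gs_one]
    congr 1
    have : (n:ℝ) + 1 ≠ 0 := by positivity
    field_simp
    ring
  · rw [if_neg h1]
    have hgne : gs n x ≠ 0 := (gs_pos n hx).ne'
    have hx1 : x - 1 ≠ 0 := sub_ne_zero.mpr h1
    have hden : 1 - x^(n+1) ≠ 0 := by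
      have := gs_id n x
      intro hc
      apply hx1
      apply mul_left_cancel₀ hgne
      nlinarith [this]
    congr 1
    rw [div_eq_iff hden]
    have hid := gs_id n x
    field_simp
    linear_combination hid

lemma concaveOn_revenueRate (R C μ : ℝ) (n : ℕ) (hn : 1 ≤ n)
    (hK : 0 ≤ R * μ - C * (n:ℝ)) :
    ConcaveOn ℝ (Set.Ici (0:ℝ)) (revenueRate R C μ n) := by
  have h1 : ConcaveOn ℝ (Set.Ici (0:ℝ))
      (fun x => (R * μ - C * (n:ℝ)) * (1 - (gs n x)⁻¹)) := by
    have h2 : ConcaveOn ℝ (Set.Ici (0:ℝ)) (fun x => 1 - (gs n x)⁻¹) := by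
      have h := (convexOn_inv_gs n hn).neg.add_const 1
      simp only [Pi.add_def, Pi.neg_def] at h
      simpa [sub_eq_neg_add] using h
    simpa [smul_eq_mul] using h2.smul hK
  exact ⟨h1.1, fun x hx y hy p q hp hq hpq => by
    rw [revenueRate_eq R C μ n hx, revenueRate_eq R C μ n hy,
      revenueRate_eq R C μ n (h1.1 hx hy hp hq hpq : _ ∈ Set.Ici (0:ℝ))]
    exact h1.2 hx hy hp hq hpq⟩

lemma revenueRate_abs_le (R C μ : ℝ) (n : ℕ) {x : ℝ} (hx : 0 ≤ x) :
    |revenueRate R C μ n x| ≤ |R * μ - C * (n:ℝ)| := by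
  rw [revenueRate_eq R C μ n hx, abs_mul]
  have h1 : 0 < (gs n x)⁻¹ := inv_pos.mpr (gs_pos n hx)
  have h2 : (gs n x)⁻¹ ≤ 1 := by
    rw [inv_le_one_iff₀]
    right; exact one_le_gs n hx
  have : |1 - (gs n x)⁻¹| ≤ 1 := abs_le.mpr ⟨by linarith, by linarith⟩
  nlinarith [abs_nonneg (R * μ - C * (n:ℝ))]

lemma measurable_revenueRate (R C μ : ℝ) (n : ℕ) :
    Measurable (revenueRate R C μ n) := by
  unfold revenueRate
  refine Measurable.ite (measurableSet_eq) measurable_const ?_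
  apply Measurable.const_mul
  exact (measurable_id.mul ((measurable_id.pow_const n).const_sub 1)).div
    ((measurable_id.pow_const (n+1)).const_sub 1)

lemma integrable_dirac' {f : ℝ → ℝ} (hf : Measurable f) (x : ℝ) :
    Integrable f (Measure.dirac x) := by
  refine ⟨hf.aestronglyMeasurable, ?_⟩
  rw [hasFiniteIntegral_def, lintegral_dirac' _ hf.enorm]
  exact enorm_lt_top

lemma integral_three_point (pa pm pb : ℝ) (hpa : 0 ≤ pa) (hpm : 0 ≤ pm) (hpb : 0 ≤ pb)
    (a m b : ℝ) (f : ℝ → ℝ) (hf : Measurable f) :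
    ∫ x, f x ∂(ENNReal.ofReal pa • Measure.dirac a +
      (ENNReal.ofReal pm • Measure.dirac m + ENNReal.ofReal pb • Measure.dirac b)) =
      pa * f a + (pm * f m + pb * f b) := by
  have hia : Integrable f (ENNReal.ofReal pa • Measure.dirac a) :=
    (integrable_dirac' hf a).smul_measure ENNReal.ofReal_ne_top
  have him : Integrable f (ENNReal.ofReal pm • Measure.dirac m) :=
    (integrable_dirac' hf m).smul_measure ENNReal.ofReal_ne_top
  have hib : Integrable f (ENNReal.ofReal pb • Measure.dirac b) :=
    (integrable_dirac' hf b).smul_measure ENNReal.ofReal_ne_top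
  rw [integral_add_measure hia (him.add_measure hib), integral_add_measure him hib,
    integral_smul_measure, integral_smul_measure, integral_smul_measure,
    integral_dirac' _ _ hf.stronglyMeasurable, integral_dirac' _ _ hf.stronglyMeasurable,
    integral_dirac' _ _ hf.stronglyMeasurable,
    ENNReal.toReal_ofReal hpa, ENNReal.toReal_ofReal hpm, ENNReal.toReal_ofReal hpb]
  simp [smul_eq_mul]

set_option maxHeartbeats 1000000 in
theorem stmt10 (R C μ : ℝ) (hR : 0 < R) (hC : 0 < C) (hμ : 0 < μ)
    (n : ℕ) (hn : 1 ≤ n) (hRC : C * (n : ℝ) ≤ R * μ)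
    (a b m d : ℝ) (ha : 0 ≤ a) (ham : a < m) (hmb : m < b)
    (hd0 : 0 < d) (hd : d < 2 * (m - a) * (b - m) / (b - a)) :
    sInf ((fun P => ∫ ρ, revenueRate R C μ n ρ ∂P) '' MADSet a b m d) =
      d / (2 * (m - a)) * revenueRate R C μ n a +
      (1 - d / (2 * (m - a)) - d / (2 * (b - m))) * revenueRate R C μ n m +
      d / (2 * (b - m)) * revenueRate R C μ n b := by
  set r := revenueRate R C μ n with hrdef
  have hK : 0 ≤ R * μ - C * (n:ℝ) := by linarith
  have hconc := concaveOn_revenueRate R C μ n hn hK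
  have hrmeas := measurable_revenueRate R C μ n
  have hma : (0:ℝ) < m - a := by linarith
  have hbm : (0:ℝ) < b - m := by linarith
  have hba : (0:ℝ) < b - a := by linarith
  set pa := d / (2*(m-a)) with hpa_def
  set pb := d / (2*(b-m)) with hpb_def
  set pm := 1 - pa - pb with hpm_def
  have hpa : 0 < pa := by rw [hpa_def]; positivity
  have hpb : 0 < pb := by rw [hpb_def]; positivity
  have hpm : 0 < pm := by
    have h1 : d * (b-a) < 2*(m-a)*(b-m) := by
      rw [lt_div_iff₀ hba] at hd; linarith
    have h2 : pa + pb = d*(b-a) / (2*(m-a)*(b-m)) := by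
      rw [hpa_def, hpb_def]; field_simp; ring
    have h3 : pa + pb < 1 := by
      rw [h2, div_lt_one (by positivity)]; linarith
    rw [hpm_def]; linarith
  -- the three point measure
  set P₀ : Measure ℝ := ENNReal.ofReal pa • Measure.dirac a +
      (ENNReal.ofReal pm • Measure.dirac m + ENNReal.ofReal pb • Measure.dirac b) with hP₀def
  have hint : ∀ f : ℝ → ℝ, Measurable f →
      ∫ x, f x ∂P₀ = pa * f a + (pm * f m + pb * f b) := fun f hf =>
    integral_three_point pa pm pb hpa.le hpm.le hpb.le a m b f hf
  have hP₀prob : IsProbabilityMeasure P₀ := by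
    constructor
    rw [hP₀def]
    simp only [Measure.add_apply, Measure.smul_apply, Measure.dirac_apply_of_mem
      (Set.mem_univ _), smul_eq_mul, mul_one]
    rw [← ENNReal.ofReal_add hpm.le hpb.le, ← ENNReal.ofReal_add hpa.le (by positivity)]
    rw [show pa + (pm + pb) = 1 by rw [hpm_def]; ring, ENNReal.ofReal_one]
  have hP₀supp : P₀ (Set.Icc a b)ᶜ = 0 := by
    have hdirac0 : ∀ z ∈ Set.Icc a b, Measure.dirac z (Set.Icc a b)ᶜ = 0 := fun z hz => by
      rw [Measure.dirac_apply' _ measurableSet_Icc.compl,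
        Set.indicator_of_notMem (by simpa using hz)]
    rw [hP₀def]
    simp only [Measure.add_apply, Measure.smul_apply,
      hdirac0 a ⟨le_refl a, by linarith⟩, hdirac0 m ⟨by linarith, by linarith⟩,
      hdirac0 b ⟨by linarith, le_refl b⟩, smul_eq_mul, mul_zero, add_zero]
  have hP₀mean : (∫ ρ, ρ ∂P₀) = m := by
    rw [hint (fun x => x) measurable_id]
    simp only [hpm_def, hpa_def, hpb_def]
    field_simp
    ring
  have hP₀mad : (∫ ρ, |ρ - m| ∂P₀) = d := by
    rw [hint (fun x => |x - m|) ((measurable_id.sub_const m).abs), abs_of_nonpos (by linarith : a - m ≤ 0),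
      sub_self, abs_zero, abs_of_nonneg (by linarith : (0:ℝ) ≤ b - m),
      ]
    simp only [hpm_def, hpa_def, hpb_def]
    field_simp
    ring
  have hP₀mem : P₀ ∈ MADSet a b m d := ⟨hP₀prob, hP₀supp, hP₀mean, hP₀mad⟩
  have hP₀val : (∫ ρ, r ρ ∂P₀) = pa * r a + (pm * r m + pb * r b) := hint r hrmeas
  -- slopes
  set β₁ := (r m - r a)/(m-a) with hβ₁
  set β₂ := (r b - r m)/(b-m) with hβ₂
  set βs := (β₁+β₂)/2 with hβs
  set γ := (β₁-β₂)/2 with hγ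
  have hVeq : pa * r a + (pm * r m + pb * r b) = r m - γ * d := by
    simp only [hγ, hβ₁, hβ₂, hpm_def, hpa_def, hpb_def]
    field_simp
    ring
  -- lower bound for any P in the MAD set
  have lb : ∀ P ∈ MADSet a b m d, r m - γ * d ≤ ∫ ρ, r ρ ∂P := by
    rintro P ⟨hprob, hsupp, hmeanP, hmadP⟩
    haveI := hprob
    have haeIcc : ∀ᵐ ρ ∂P, ρ ∈ Set.Icc a b := by
      rw [ae_iff, ← Set.compl_def]
      exact hsupp
    have hrint : Integrable r P := by
      refine Integrable.mono' (integrable_const (|R*μ - C*(n:ℝ)|)) hrmeas.aestronglyMeasurable ?_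
      filter_upwards [haeIcc] with ρ hρ
      have h0ρ : (0:ℝ) ≤ ρ := le_trans ha hρ.1
      simpa [Real.norm_eq_abs] using revenueRate_abs_le R C μ n h0ρ
    have hidint : Integrable (fun ρ => ρ) P := by
      refine Integrable.mono' (integrable_const (|a| + |b|)) measurable_id.aestronglyMeasurable ?_
      filter_upwards [haeIcc] with ρ hρ
      have h1 := neg_abs_le a
      have h2 := le_abs_self b
      have h3 := abs_nonneg a
      have h4 := abs_nonneg b
      rw [Real.norm_eq_abs, abs_le]
      constructor <;> [linarith [hρ.1]; linarith [hρ.2]]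
    have habsint : Integrable (fun ρ => |ρ - m|) P := by
      refine Integrable.mono' (integrable_const (b - a))
        ((measurable_id.sub_const m).abs).aestronglyMeasurable ?_
      filter_upwards [haeIcc] with ρ hρ
      rw [Real.norm_eq_abs, abs_abs, abs_le]
      exact ⟨by linarith [hρ.1], by linarith [hρ.2]⟩
    -- pointwise chord inequality
    have hgle : ∀ ρ ∈ Set.Icc a b, r m + βs*(ρ-m) - γ*|ρ-m| ≤ r ρ := by
      intro ρ hρ
      rcases le_total ρ m with h | h
      · rw [abs_of_nonpos (by linarith : ρ - m ≤ 0)]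
        have heq1 : r m + βs*(ρ-m) - γ*(-(ρ-m)) = r m + β₁*(ρ-m) := by
          rw [hβs, hγ]; ring
        rw [heq1]
        set t := (m-ρ)/(m-a) with ht
        have ht0 : 0 ≤ t := by
          rw [ht]; exact div_nonneg (by linarith) hma.le
        have ht1 : t ≤ 1 := by
          rw [ht, div_le_one hma]; linarith [hρ.1]
        have hρeq : t * a + (1-t) * m = ρ := by
          rw [ht]; field_simp; ring
        have hcomb := hconc.2 (Set.mem_Ici.mpr ha) (Set.mem_Ici.mpr (by linarith : (0:ℝ) ≤ m))
          ht0 (by linarith : 0 ≤ 1 - t) (by ring : t + (1-t) = 1)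
        simp only [smul_eq_mul] at hcomb
        rw [hρeq] at hcomb
        have heq2 : r m + β₁*(ρ-m) = t * r a + (1-t) * r m := by
          rw [hβ₁, ht]; field_simp; ring
        rw [heq2]
        exact hcomb
      · rw [abs_of_nonneg (by linarith : 0 ≤ ρ - m)]
        have heq1 : r m + βs*(ρ-m) - γ*(ρ-m) = r m + β₂*(ρ-m) := by
          rw [hβs, hγ]; ring
        rw [heq1]
        set t := (ρ-m)/(b-m) with ht
        have ht0 : 0 ≤ t := by
          rw [ht]; exact div_nonneg (by linarith) hbm.le
        have ht1 : t ≤ 1 := by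
          rw [ht, div_le_one hbm]; linarith [hρ.2]
        have hρeq : (1-t) * m + t * b = ρ := by
          rw [ht]; field_simp; ring
        have hcomb := hconc.2 (Set.mem_Ici.mpr (by linarith : (0:ℝ) ≤ m))
          (Set.mem_Ici.mpr (by linarith : (0:ℝ) ≤ b))
          (by linarith : 0 ≤ 1 - t) ht0 (by ring : (1-t) + t = 1)
        simp only [smul_eq_mul] at hcomb
        rw [hρeq] at hcomb
        have heq2 : r m + β₂*(ρ-m) = (1-t) * r m + t * r b := by
          rw [hβ₂, ht]; field_simp; ring
        rw [heq2]
        exact hcomb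
    have hi1a : Integrable (fun ρ : ℝ => βs * (ρ - m)) P :=
      (hidint.sub (integrable_const m)).const_mul βs
    have hi1 : Integrable (fun ρ => r m + βs*(ρ-m)) P :=
      (integrable_const (r m)).add hi1a
    have hi2 : Integrable (fun ρ => γ * |ρ-m|) P := habsint.const_mul γ
    have hgint : Integrable (fun ρ => r m + βs*(ρ-m) - γ*|ρ-m|) P := hi1.sub hi2
    have hsub0 : (∫ ρ, (ρ - m) ∂P) = 0 := by
      rw [integral_sub hidint (integrable_const m), hmeanP, integral_const]
      simp [measure_univ]
    have hgval : (∫ ρ, (r m + βs*(ρ-m) - γ*|ρ-m|) ∂P) = r m - γ * d := by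
      rw [integral_sub hi1 hi2, integral_add (integrable_const (r m)) hi1a,
        integral_const_mul, integral_const_mul, hsub0, hmadP, integral_const]
      simp [measure_univ]
    calc r m - γ * d = ∫ ρ, (r m + βs*(ρ-m) - γ*|ρ-m|) ∂P := hgval.symm
    _ ≤ ∫ ρ, r ρ ∂P := by
        refine integral_mono_ae hgint hrint ?_
        filter_upwards [haeIcc] with ρ hρ
        exact hgle ρ hρ
  -- conclusion
  have hblow : ∀ v ∈ (fun P => ∫ ρ, r ρ ∂P) '' MADSet a b m d, r m - γ * d ≤ v := by
    rintro v ⟨P, hP, rfl⟩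
    exact lb P hP
  have hgoal : pa * r a + pm * r m + pb * r b = r m - γ * d := by rw [← hVeq]; ring
  rw [hgoal]
  apply le_antisymm
  · refine csInf_le ⟨r m - γ * d, hblow⟩ ?_
    refine ⟨P₀, hP₀mem, ?_⟩
    show (∫ ρ, r ρ ∂P₀) = r m - γ * d
    rw [hP₀val, hVeq]
  · exact le_csInf ⟨_, ⟨P₀, hP₀mem, rfl⟩⟩ hblow
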